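/- Fix n with 1 ≤ n ≤ N and set Q(t) = ω_{2−α}(t_n − t) for 0 ≤ t < t_n, with Q(t_n) = 0. For 1 ≤ k ≤ n let Π_{1,k}Q be the linear interpolant of Q at t_{k−1} and t_k, and let E_k(t) = Q(t) − (Π_{1,k}Q)(t). Then for every t ∈ (t_{k−1}, t_k): (a) E_k(t) ≥ 0 for all 1 ≤ k ≤ n; (b) E_n(t) ≤ (t − t_{n−1}) a^{(n)}_0; (c) for 1 ≤ k ≤ n−1, E_k(t) ≤ 2 (t − t_{k−1}) (a^{(n)}_{n−k−1} − a^{(n)}_{n−k}). -/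

import Mathlib

open Real Finset

set_option maxHeartbeats 1000000

/-- The kernel `ω_μ(s) = s^(μ-1)/Γ(μ)`. -/
noncomputable def omegaK (μ s : ℝ) : ℝ := s ^ (μ - 1) / Real.Gamma μ

/-- The L1 kernel: `L1K α t n k` is `a^{(n)}_{n-k}`. -/
noncomputable def L1K (α : ℝ) (t : ℕ → ℝ) (n k : ℕ) : ℝ :=
  (omegaK (2 - α) (t n - t (k - 1)) - omegaK (2 - α) (t n - t k)) / (t k - t (k - 1))

/-- The error `E_k(x) = Q(x) - (Π_{1,k}Q)(x)` of the linear interpolant on `[t_{k-1}, t_k]`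
of `Q(x) = ω_{2-α}(t_n - x)`. -/
noncomputable def interpErr (α : ℝ) (t : ℕ → ℝ) (n k : ℕ) (x : ℝ) : ℝ :=
  omegaK (2 - α) (t n - x) -
    (omegaK (2 - α) (t n - t (k - 1)) * (t k - x) +
      omegaK (2 - α) (t n - t k) * (x - t (k - 1))) / (t k - t (k - 1))

lemma aux_convexOn_rpow_neg {q : ℝ} (hq : q < 0) :
    ConvexOn ℝ (Set.Ioi (0:ℝ)) fun s : ℝ => s ^ q := by
  refine MonotoneOn.convexOn_of_deriv (convex_Ioi 0) ?_ ?_ ?_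
  · intro x hx
    exact (Real.continuousAt_rpow_const x q (Or.inl (ne_of_gt hx))).continuousWithinAt
  · intro x hx
    rw [interior_Ioi] at hx
    exact (Real.hasDerivAt_rpow_const (p := q)
      (Or.inl (ne_of_gt hx))).differentiableAt.differentiableWithinAt
  · intro x hx y hy hxy
    rw [interior_Ioi] at hx hy
    rw [Real.deriv_rpow_const x q,
      Real.deriv_rpow_const y q]
    have h := Real.antitoneOn_rpow_Ioi_of_exponent_nonpos (r := q - 1)
      (by linarith) hx hy hxy
    exact mul_le_mul_of_nonpos_left h hq.le

/-- Tangent line inequality for the concave function `u ↦ u ^ p`, `0 < p < 1`. -/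
lemma aux_tangent {p u v : ℝ} (hp0 : 0 < p) (hp1 : p < 1) (hu : 0 ≤ u) (hv : 0 < v) :
    u ^ p ≤ v ^ p + p * v ^ (p - 1) * (u - v) := by
  have hs : (-1:ℝ) ≤ u / v - 1 := by
    have h0 : 0 ≤ u / v := div_nonneg hu hv.le
    linarith
  have h := rpow_one_add_le_one_add_mul_self hs hp0.le hp1.le
  rw [show 1 + (u / v - 1) = u / v by ring] at h
  rw [Real.div_rpow hu hv.le] at h
  have hvp : 0 < v ^ p := Real.rpow_pos_of_pos hv p
  have hkey : (1 + p * (u / v - 1)) * v ^ p = v ^ p + p * v ^ (p - 1) * (u - v) := by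
    rw [Real.rpow_sub_one hv.ne']
    field_simp
  calc u ^ p ≤ (1 + p * (u / v - 1)) * v ^ p := (div_le_iff₀ hvp).mp h
    _ = _ := hkey

/-- Trapezoid inequality coming from convexity of `s ↦ s ^ (p-1)`. -/
lemma aux_trap {p u v : ℝ} (hp0 : 0 < p) (hp1 : p < 1) (hu : 0 < u) (huv : u < v) :
    v ^ p - u ^ p ≤ p * (v - u) * (u ^ (p - 1) + v ^ (p - 1)) / 2 := by
  have hq0 : p - 1 < 0 := by linarith
  have hq1 : (-1:ℝ) < p - 1 := by linarith
  have hv : 0 < v := lt_trans hu huv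
  have hvu : 0 < v - u := by linarith
  set q := p - 1 with hqdef
  set c1 : ℝ := (v ^ q - u ^ q) / (v - u) with hc1
  set c0 : ℝ := u ^ q - u * c1 with hc0
  have hpoint : ∀ s ∈ Set.Icc u v, s ^ q ≤ c0 + c1 * s := by
    intro s hs
    have ha : 0 ≤ (v - s) / (v - u) := div_nonneg (by linarith [hs.2]) hvu.le
    have hb : 0 ≤ (s - u) / (v - u) := div_nonneg (by linarith [hs.1]) hvu.le
    have hab : (v - s) / (v - u) + (s - u) / (v - u) = 1 := by
      rw [← add_div, div_eq_one_iff_eq hvu.ne']; ring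
    have h := (aux_convexOn_rpow_neg hq0).2 (Set.mem_Ioi.mpr hu)
      (Set.mem_Ioi.mpr hv) ha hb hab
    simp only [smul_eq_mul] at h
    rw [show (v - s) / (v - u) * u + (s - u) / (v - u) * v = s by
      field_simp; ring] at h
    calc s ^ q ≤ (v - s)/(v - u) * u ^ q + (s - u)/(v - u) * v ^ q := h
      _ = c0 + c1 * s := by rw [hc0, hc1]; field_simp; ring
  have hint1 : IntervalIntegrable (fun s : ℝ => s ^ q) MeasureTheory.volume u v := by
    apply ContinuousOn.intervalIntegrable
    rw [Set.uIcc_of_le huv.le]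
    intro s hs
    exact (Real.continuousAt_rpow_const s q
      (Or.inl (ne_of_gt (lt_of_lt_of_le hu hs.1)))).continuousWithinAt
  have hint2 : IntervalIntegrable (fun s : ℝ => c0 + c1 * s) MeasureTheory.volume u v :=
    (continuous_const.add (continuous_const.mul continuous_id)).intervalIntegrable u v
  have hmono := intervalIntegral.integral_mono_on huv.le hint1 hint2 hpoint
  have hI1 : (∫ s in u..v, s ^ q) = (v ^ p - u ^ p) / p := by
    rw [integral_rpow (Or.inl hq1), hqdef]
    norm_num
  have hI2 : (∫ s in u..v, (c0 + c1 * s)) = c0 * (v - u) + c1 * ((v^2 - u^2)/2) := by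
    have hsplit : (∫ s in u..v, (c0 + c1 * s)) =
        (∫ s in u..v, c0) + ∫ s in u..v, c1 * s :=
      intervalIntegral.integral_add intervalIntegrable_const
        ((continuous_const.mul continuous_id').intervalIntegrable u v)
    rw [hsplit, intervalIntegral.integral_const, intervalIntegral.integral_const_mul,
      integral_id]
    simp [smul_eq_mul]
    ring
  rw [hI1, hI2] at hmono
  have hchord : c0 * (v - u) + c1 * ((v^2 - u^2)/2) = (v - u) * (u ^ q + v ^ q) / 2 := by
    rw [hc0, hc1]; field_simp; ring
  rw [hchord] at hmono
  have h2 : v ^ p - u ^ p ≤ (v - u) * (u ^ q + v ^ q) / 2 * p := (div_le_iff₀ hp0).mp hmono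
  linarith [h2]

theorem interpolation_error_bounds
    (T : ℝ) (hT : 0 < T) (N : ℕ) (hN : 1 ≤ N)
    (t : ℕ → ℝ) (ht0 : t 0 = 0) (htN : t N = T)
    (hmesh : ∀ k, 1 ≤ k → k ≤ N → t (k - 1) < t k)
    (α : ℝ) (hα0 : 0 < α) (hα1 : α < 1)
    (n : ℕ) (hn1 : 1 ≤ n) (hnN : n ≤ N) :
    ∀ k, 1 ≤ k → k ≤ n → ∀ x, t (k - 1) < x → x < t k →
      (0 ≤ interpErr α t n k x) ∧
      (k = n → interpErr α t n n x ≤ (x - t (n - 1)) * L1K α t n n) ∧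
      (k ≤ n - 1 → interpErr α t n k x ≤
        2 * (x - t (k - 1)) * (L1K α t n (k + 1) - L1K α t n k)) := by
  intro k hk1 hkn x hx1 hx2
  obtain ⟨G, hGdef⟩ : ∃ G : ℝ, G = Real.Gamma (2 - α) := ⟨_, rfl⟩
  obtain ⟨p, hpdef⟩ : ∃ p : ℝ, p = 1 - α := ⟨_, rfl⟩
  have hGpos : 0 < G := hGdef ▸ Real.Gamma_pos_of_pos (by linarith)
  have hGne : G ≠ 0 := hGpos.ne'
  have hp0 : (0:ℝ) < p := by rw [hpdef]; linarith
  have hp1 : p < 1 := by rw [hpdef]; linarith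
  have hkN : k ≤ N := le_trans hkn hnN
  have hmono : ∀ j, j ≤ N → ∀ i, i ≤ j → t i ≤ t j := by
    intro j
    induction j with
    | zero => intro _ i hi; rw [Nat.le_zero.mp hi]
    | succ m ih =>
      intro hm i hi
      rcases Nat.lt_succ_iff_lt_or_eq.mp (Nat.lt_succ_of_le hi) with h | h
      · have h1 : t i ≤ t m := ih (by omega) i (by omega)
        have h2 := hmesh (m+1) (by omega) hm
        simp only [Nat.add_sub_cancel] at h2
        linarith
      · rw [h]
  have hτ : 0 < t k - t (k - 1) := sub_pos.mpr (hmesh k hk1 hkN)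
  have htkn : t k ≤ t n := hmono n hnN k hkn
  have hs0 : 0 < t n - x := by linarith
  have hu0 : 0 ≤ t n - t k := by linarith
  have hv0 : 0 < t n - t (k-1) := by linarith
  have hd : 0 < x - t (k-1) := by linarith
  have he : 0 < t k - x := by linarith
  have hω : ∀ s : ℝ, omegaK (2 - α) s = s ^ p / G := by
    intro s
    rw [omegaK, show (2:ℝ) - α - 1 = p from by rw [hpdef]; ring, ← hGdef]
  have hE : interpErr α t n k x =
      ((t k - t (k-1)) * (t n - x) ^ p -
        ((t n - t (k-1)) ^ p * (t k - x) + (t n - t k) ^ p * (x - t (k-1)))) /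
        (G * (t k - t (k-1))) := by
    rw [interpErr, hω, hω, hω]
    field_simp
  have hconc := Real.concaveOn_rpow hp0.le hp1.le
  have hcc : (t k - x)/(t k - t (k-1)) * (t n - t (k-1)) ^ p
      + (x - t (k-1))/(t k - t (k-1)) * (t n - t k) ^ p ≤ (t n - x) ^ p := by
    have hab : (t k - x)/(t k - t (k-1)) + (x - t (k-1))/(t k - t (k-1)) = 1 := by
      rw [← add_div, div_eq_one_iff_eq hτ.ne']; ring
    have h := hconc.2 (Set.mem_Ici.mpr hv0.le) (Set.mem_Ici.mpr hu0)
      (div_nonneg he.le hτ.le) (div_nonneg hd.le hτ.le) hab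
    simp only [smul_eq_mul] at h
    rwa [show (t k - x)/(t k - t (k-1)) * (t n - t (k-1))
        + (x - t (k-1))/(t k - t (k-1)) * (t n - t k) = t n - x from by
      field_simp; ring] at h
  rw [div_mul_eq_mul_div, div_mul_eq_mul_div, ← add_div, div_le_iff₀ hτ] at hcc
  have hnum : 0 ≤ (t k - t (k-1)) * (t n - x) ^ p -
      ((t n - t (k-1)) ^ p * (t k - x) + (t n - t k) ^ p * (x - t (k-1))) := by
    nlinarith [hcc]
  refine ⟨by rw [hE]; exact div_nonneg hnum (mul_pos hGpos hτ).le, ?_, ?_⟩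
  · intro hkeq
    subst hkeq
    have hL : L1K α t k k = (t k - t (k-1)) ^ p / (G * (t k - t (k-1))) := by
      rw [L1K, hω, hω, sub_self, Real.zero_rpow hp0.ne', zero_div, sub_zero, div_div]
    have hSA : (t k - x) ^ p ≤ (t k - t (k-1)) ^ p :=
      Real.rpow_le_rpow he.le (by linarith) hp0.le
    have hnum2 : (t k - t (k-1)) * (t k - x) ^ p -
        ((t k - t (k-1)) ^ p * (t k - x) + (t k - t k) ^ p * (x - t (k-1)))
        ≤ (x - t (k-1)) * (t k - t (k-1)) ^ p := by
      rw [sub_self, Real.zero_rpow hp0.ne']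
      nlinarith [mul_le_mul_of_nonneg_left hSA hτ.le]
    calc interpErr α t k k x = _ := hE
      _ ≤ (x - t (k-1)) * (t k - t (k-1)) ^ p / (G * (t k - t (k-1))) :=
          div_le_div_of_nonneg_right hnum2 (mul_pos hGpos hτ).le
      _ = (x - t (k-1)) * L1K α t k k := by rw [hL]; ring
  · intro hkn1
    have hk1N : k + 1 ≤ N := by omega
    have ht1 : t (k+1) ≤ t n := hmono n hnN (k+1) (by omega)
    have hτ' : 0 < t (k+1) - t k := by
      have h2 := hmesh (k+1) (by omega) hk1N
      simp only [Nat.add_sub_cancel] at h2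
      linarith
    have hw0 : 0 ≤ t n - t (k+1) := by linarith
    have hu0' : 0 < t n - t k := by linarith
    have hL1 : L1K α t n k =
        ((t n - t (k-1)) ^ p - (t n - t k) ^ p) / (G * (t k - t (k-1))) := by
      rw [L1K, hω, hω, div_sub_div_same, div_div]
    have hL2 : L1K α t n (k+1) =
        ((t n - t k) ^ p - (t n - t (k+1)) ^ p) / (G * (t (k+1) - t k)) := by
      rw [L1K, hω, hω]
      simp only [Nat.add_sub_cancel]
      rw [div_sub_div_same, div_div]
    have f1 : (t n - x) ^ p ≤ (t n - t (k-1)) ^ p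
        + p * (t n - t (k-1)) ^ (p-1) * ((t n - x) - (t n - t (k-1))) :=
      aux_tangent hp0 hp1 hs0.le hv0
    have f2 : (t n - t (k-1)) ^ p - (t n - t k) ^ p ≤
        p * ((t n - t (k-1)) - (t n - t k)) *
          ((t n - t k) ^ (p-1) + (t n - t (k-1)) ^ (p-1)) / 2 :=
      aux_trap hp0 hp1 hu0' (by linarith)
    have f3 : (t n - t (k+1)) ^ p ≤ (t n - t k) ^ p
        + p * (t n - t k) ^ (p-1) * ((t n - t (k+1)) - (t n - t k)) :=
      aux_tangent hp0 hp1 hw0 hu0'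
    have f4 : (t n - t (k-1)) ^ (p-1) ≤ (t n - t k) ^ (p-1) :=
      Real.antitoneOn_rpow_Ioi_of_exponent_nonpos (by linarith)
        (Set.mem_Ioi.mpr hu0') (Set.mem_Ioi.mpr hv0) (by linarith)
    have hb : p * (t n - t k) ^ (p-1) ≤
        ((t n - t k) ^ p - (t n - t (k+1)) ^ p) / (t (k+1) - t k) := by
      rw [le_div_iff₀ hτ']
      nlinarith [f3]
    have hgu : (0:ℝ) ≤ (t n - t k) ^ (p-1) := Real.rpow_nonneg hu0'.le _
    have hgv : (0:ℝ) ≤ (t n - t (k-1)) ^ (p-1) := Real.rpow_nonneg hv0.le _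
    have core : (t n - t (k-1)) ^ p - (t n - t k) ^ p
        - (t k - t (k-1)) * (p * (t n - t (k-1)) ^ (p-1))
        ≤ 2 * ((t k - t (k-1)) *
            (((t n - t k) ^ p - (t n - t (k+1)) ^ p) / (t (k+1) - t k))
          - ((t n - t (k-1)) ^ p - (t n - t k) ^ p)) := by
      have h5 := mul_le_mul_of_nonneg_left hb hτ.le
      have h6 := mul_le_mul_of_nonneg_left f4 (mul_nonneg hp0.le hτ.le)
      linarith [f2, h5, h6]
    have numc : (t k - t (k-1)) * (t n - x) ^ p -
        ((t n - t (k-1)) ^ p * (t k - x) + (t n - t k) ^ p * (x - t (k-1)))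
        ≤ 2 * (x - t (k-1)) * ((t k - t (k-1)) *
            (((t n - t k) ^ p - (t n - t (k+1)) ^ p) / (t (k+1) - t k))
          - ((t n - t (k-1)) ^ p - (t n - t k) ^ p)) := by
      have h7 := mul_le_mul_of_nonneg_left f1 hτ.le
      have h8 := mul_le_mul_of_nonneg_left core hd.le
      linarith [h7, h8]
    have hRHS : 2 * (x - t (k-1)) * (L1K α t n (k+1) - L1K α t n k) =
        (2 * (x - t (k-1)) * ((t k - t (k-1)) *
            (((t n - t k) ^ p - (t n - t (k+1)) ^ p) / (t (k+1) - t k))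
          - ((t n - t (k-1)) ^ p - (t n - t k) ^ p))) / (G * (t k - t (k-1))) := by
      rw [hL1, hL2]
      field_simp
    rw [hE, hRHS]
    exact div_le_div_of_nonneg_right numc (mul_pos hGpos hτ).le
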